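/- arXiv:1711.11405 — 3 statements merged into one kernel-verified Lean document; each statement's English description precedes it below -/
import Mathlib

section
/- Conditional expected one-step contraction of randomized Kaczmarz: if x* solves Ax = b, x ∈ X (the column span of A^H) with x − x* ∈ X, and the next row index R is chosen with probabilities p_i = ||a_i||^2/||A||_F^2, then E_R ||x' − x*||^2 ≤ (1 − κ_X(A)) ||x − x*||^2, where x' is the Kaczmarz update using row R. -/
open Matrix

private lemma kacz_aux {n : ℕ} (d : ℂ) (w u : Fin n → ℂ) :
    ∑ k, Complex.normSq (u k - d * star (w k)) =
      (∑ k, Complex.normSq (u k)) + Complex.normSq d * (∑ k, Complex.normSq (w k))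
        - 2 * ((starRingEnd ℂ) d * ∑ k, w k * u k).re := by
  simp only [Finset.mul_sum, Complex.re_sum]
  rw [← Finset.sum_add_distrib, ← Finset.sum_sub_distrib]
  refine Finset.sum_congr rfl fun k _ => ?_
  simp only [Complex.star_def]
  rw [Complex.normSq_sub, Complex.normSq_mul, Complex.normSq_conj, _root_.map_mul, Complex.conj_conj,
    show u k * ((starRingEnd ℂ) d * w k) = (starRingEnd ℂ) d * (w k * u k) from by ring]

/-- Conditional expected one-step contraction of randomized Kaczmarz:
if `x*` solves `Ax = b`, `x − x* ∈ X = range(Aᴴ)`, and the next row index `R` is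
chosen with probabilities `pᵢ = ‖aᵢ‖²/‖A‖_F²`, then
`E_R ‖x' − x*‖² ≤ (1 − κ_X(A)) ‖x − x*‖²` where `x'` is the Kaczmarz update using row `R`. -/
theorem kaczmarz_expected_one_step_contraction {m n : ℕ}
    (A : Matrix (Fin m) (Fin n) ℂ) (hA : ∀ i, A i ≠ 0)
    (b : Fin m → ℂ) (xs x : Fin n → ℂ)
    (hxs : A.mulVec xs = b) (hx : x - xs ∈ Set.range Aᴴ.mulVec) :
    let F2 : ℝ := ∑ i, ∑ j, Complex.normSq (A i j)
    let p : Fin m → ℝ := fun i => (∑ j, Complex.normSq (A i j)) / F2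
    let κ : ℝ := sInf {r : ℝ | ∃ y ∈ Set.range Aᴴ.mulVec, y ≠ 0 ∧
      r = (∑ i, Complex.normSq (A.mulVec y i)) / (F2 * ∑ j, Complex.normSq (y j))}
    let step : Fin m → (Fin n → ℂ) := fun i =>
      x + ((b i - A.mulVec x i) / ((∑ j, Complex.normSq (A i j) : ℝ) : ℂ)) • star (A i)
    ∑ i, p i * (∑ k, Complex.normSq ((step i - xs) k))
      ≤ (1 - κ) * ∑ k, Complex.normSq ((x - xs) k) := by
  intro F2 p κ step
  set e : Fin n → ℂ := x - xs with he
  set E : ℝ := ∑ k, Complex.normSq (e k) with hE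
  set N : Fin m → ℝ := fun i => ∑ j, Complex.normSq (A i j) with hN
  have hNpos : ∀ i, 0 < N i := by
    intro i
    have hj : ∃ j, A i j ≠ 0 := by
      by_contra h
      push_neg at h
      exact hA i (funext h)
    obtain ⟨j, hj⟩ := hj
    exact Finset.sum_pos' (fun j _ => Complex.normSq_nonneg _)
      ⟨j, Finset.mem_univ j, Complex.normSq_pos.mpr hj⟩
  have hbi : ∀ i, b i - A.mulVec x i = -(A.mulVec e i) := by
    intro i
    rw [he, Matrix.mulVec_sub, hxs]
    simp
  -- per-index identity
  have hstep : ∀ i, (∑ k, Complex.normSq ((step i - xs) k))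
      = E - Complex.normSq (A.mulVec e i) / N i := by
    intro i
    have h1 : ∀ k, (step i - xs) k
        = e k - (A.mulVec e i / (N i : ℂ)) * star (A i k) := by
      intro k
      simp only [step, Pi.sub_apply, Pi.add_apply, Pi.smul_apply, smul_eq_mul,
        Pi.star_apply, he, hbi i, hN]
      ring
    have h2 : (∑ k, A i k * e k) = A.mulVec e i := by
      simp [Matrix.mulVec, dotProduct]
    calc ∑ k, Complex.normSq ((step i - xs) k)
        = ∑ k, Complex.normSq (e k - (A.mulVec e i / (N i : ℂ)) * star (A i k)) := by
          exact Finset.sum_congr rfl fun k _ => by rw [h1 k]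
      _ = E + Complex.normSq (A.mulVec e i / (N i : ℂ)) * N i
            - 2 * ((starRingEnd ℂ) (A.mulVec e i / (N i : ℂ)) * A.mulVec e i).re := by
          rw [kacz_aux, h2, hE, hN]
      _ = E - Complex.normSq (A.mulVec e i) / N i := by
          have hNne : (N i) ≠ 0 := (hNpos i).ne'
          rw [Complex.normSq_div, Complex.normSq_ofReal, map_div₀, Complex.conj_ofReal,
            div_mul_eq_mul_div ((starRingEnd ℂ) (A.mulVec e i)) ((N i : ℂ)) (A.mulVec e i),
            mul_comm ((starRingEnd ℂ) (A.mulVec e i)) (A.mulVec e i), Complex.mul_conj,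
            ← Complex.ofReal_div, Complex.ofReal_re]
          field_simp
          ring
  rcases eq_or_ne m 0 with hm | hm
  · subst hm
    have hset : {r : ℝ | ∃ y ∈ Set.range Aᴴ.mulVec, y ≠ 0 ∧
        r = (∑ i, Complex.normSq (A.mulVec y i)) / (F2 * ∑ j, Complex.normSq (y j))} = ∅ := by
      ext r
      simp only [Set.mem_setOf_eq, Set.mem_empty_iff_false, iff_false]
      rintro ⟨y, ⟨v, rfl⟩, hy0, -⟩
      exact hy0 (funext fun j => by simp [Matrix.mulVec, dotProduct])
    have hκ : κ = 0 := by
      show sInf _ = 0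
      rw [hset]
      exact Real.sInf_empty
    rw [hκ]
    simp only [Finset.univ_eq_empty, Finset.sum_empty, sub_zero, one_mul]
    exact Finset.sum_nonneg fun k _ => Complex.normSq_nonneg _
  · have hmpos : 0 < m := Nat.pos_of_ne_zero hm
    have hF2 : F2 = ∑ i, N i := by rw [hN]
    have hF2pos : 0 < F2 := by
      rw [hF2]
      haveI : Nonempty (Fin m) := Fin.pos_iff_nonempty.mp hmpos
      exact Finset.sum_pos (fun i _ => hNpos i) Finset.univ_nonempty
    set S : ℝ := ∑ i, Complex.normSq (A.mulVec e i) with hS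
    have hLHS : ∑ i, p i * (∑ k, Complex.normSq ((step i - xs) k)) = E - S / F2 := by
      calc ∑ i, p i * (∑ k, Complex.normSq ((step i - xs) k))
          = ∑ i, (N i / F2 * E - Complex.normSq (A.mulVec e i) / F2) := by
            refine Finset.sum_congr rfl fun i _ => ?_
            rw [hstep i]
            have hNne : (N i) ≠ 0 := (hNpos i).ne'
            have hp : p i = N i / F2 := rfl
            rw [hp]
            field_simp
        _ = E - S / F2 := by
            rw [Finset.sum_sub_distrib, ← Finset.sum_div, ← hS, ← Finset.sum_mul,
              ← Finset.sum_div, ← hF2, div_self hF2pos.ne', one_mul]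
    rw [hLHS]
    rcases eq_or_ne e 0 with he0 | he0
    · have hE0 : E = 0 := by rw [hE, he0]; simp
      have hS0 : S = 0 := by
        rw [hS, he0]
        simp [Matrix.mulVec_zero]
      rw [hE0, hS0]
      simp
    · -- main case : κ ≤ S / (F2 * E)
      have hEpos : 0 < E := by
        obtain ⟨k, hk⟩ : ∃ k, e k ≠ 0 := by
          by_contra h; push_neg at h; exact he0 (funext h)
        exact Finset.sum_pos' (fun k _ => Complex.normSq_nonneg _)
          ⟨k, Finset.mem_univ k, Complex.normSq_pos.mpr hk⟩
      have hκle : κ ≤ S / (F2 * E) := by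
        apply csInf_le
        · refine ⟨0, fun r hr => ?_⟩
          obtain ⟨y, -, -, rfl⟩ := hr
          apply div_nonneg
          · exact Finset.sum_nonneg fun i _ => Complex.normSq_nonneg _
          · exact mul_nonneg hF2pos.le (Finset.sum_nonneg fun j _ => Complex.normSq_nonneg _)
        · exact ⟨e, hx, he0, by rw [hS, hE]⟩
      have : (1 - S / (F2 * E)) * E ≤ (1 - κ) * E := by
        apply mul_le_mul_of_nonneg_right _ hEpos.le
        linarith
      refine le_trans ?_ this
      rw [sub_mul, one_mul, div_mul_eq_mul_div, mul_comm F2 E, ← div_div,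
        mul_div_assoc, div_self hEpos.ne', mul_one]
end

section
/- Randomized Kaczmarz expected error bound (Theorem 1): if Ax = b has a solution x* in X = range(A^H), the initialization x^0 lies in X, and the randomized Kaczmarz algorithm with row probabilities p_i = ||a_i||^2/||A||_F^2 produces iterates x^t, then E ||x^t − x*||^2 ≤ (1 − κ_X(A))^t ||x^0 − x*||^2. -/
open Matrix

/-- One Kaczmarz step for the equation indexed by row `i` of `A`
(here `aᵢ = star (A i)` is the conjugate of the `i`-th row, so that
`⟨aᵢ, x⟩ = (A.mulVec x) i`). -/
noncomputable def kacStep {m n : ℕ} (A : Matrix (Fin m) (Fin n) ℂ) (b : Fin m → ℂ)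
    (x : Fin n → ℂ) (i : Fin m) : Fin n → ℂ :=
  x + ((b i - A.mulVec x i) / ((∑ j, Complex.normSq (A i j) : ℝ) : ℂ)) • star (A i)

/-- Kaczmarz iterates: starting point `x0`, rows selected according to the list `l`. -/
noncomputable def kacIter {m n : ℕ} (A : Matrix (Fin m) (Fin n) ℂ) (b : Fin m → ℂ)
    (x0 : Fin n → ℂ) : List (Fin m) → (Fin n → ℂ)
  | [] => x0
  | i :: l => kacStep A b (kacIter A b x0 l) i

namespace KacAux

variable {m n : ℕ}

/-- Squared Euclidean norm of a complex vector. -/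
def nsqv {n : ℕ} (v : Fin n → ℂ) : ℝ := ∑ j, Complex.normSq (v j)

lemma nsqv_nonneg (v : Fin n → ℂ) : 0 ≤ nsqv v :=
  Finset.sum_nonneg fun _ _ => Complex.normSq_nonneg _

lemma nsqv_pos {n : ℕ} {v : Fin n → ℂ} (hv : v ≠ 0) : 0 < nsqv v := by
  rcases Function.ne_iff.1 hv with ⟨j, hj⟩
  have : 0 < Complex.normSq (v j) := by
    simpa [Complex.normSq_pos] using hj
  exact lt_of_lt_of_le this (Finset.single_le_sum
    (fun k _ => Complex.normSq_nonneg (v k)) (Finset.mem_univ j))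

lemma ofReal_nsqv (v : Fin n → ℂ) :
    ((nsqv v : ℝ) : ℂ) = ∑ j, v j * (starRingEnd ℂ) (v j) := by
  simp [nsqv, Complex.ofReal_sum, Complex.mul_conj]

/-- Pythagoras-style identity for one projection step. -/
lemma nsqv_proj (e a : Fin n → ℂ)
    (hR : (∑ j, Complex.normSq (a j)) ≠ 0) :
    nsqv (e - (((∑ j, (starRingEnd ℂ) (a j) * e j) / ((∑ j, Complex.normSq (a j) : ℝ) : ℂ)) • a))
      = nsqv e - Complex.normSq (∑ j, (starRingEnd ℂ) (a j) * e j)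
          / (∑ j, Complex.normSq (a j)) := by
  set R : ℝ := ∑ j, Complex.normSq (a j) with hRdef
  set c : ℂ := ∑ j, (starRingEnd ℂ) (a j) * e j with hcdef
  set lam : ℂ := c / (R : ℂ) with hlam
  have hRC : ((R : ℝ) : ℂ) ≠ 0 := by exact_mod_cast hR
  apply Complex.ofReal_injective
  push_cast
  rw [ofReal_nsqv, ofReal_nsqv]
  have expand : ∑ j, (e j - lam • a j) * (starRingEnd ℂ) (e j - lam • a j)
      = (∑ j, e j * (starRingEnd ℂ) (e j)) - lam * (∑ j, a j * (starRingEnd ℂ) (e j))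
        - (starRingEnd ℂ) lam * (∑ j, e j * (starRingEnd ℂ) (a j))
        + lam * (starRingEnd ℂ) lam * (∑ j, a j * (starRingEnd ℂ) (a j)) := by
    simp only [Finset.mul_sum, ← Finset.sum_sub_distrib, ← Finset.sum_add_distrib]
    refine Finset.sum_congr rfl fun j _ => ?_
    simp [map_sub, _root_.map_mul, smul_eq_mul]
    ring
  have h1 : ∑ j, a j * (starRingEnd ℂ) (e j) = (starRingEnd ℂ) c := by
    simp [hcdef, map_sum, _root_.map_mul, mul_comm]
  have h2 : ∑ j, e j * (starRingEnd ℂ) (a j) = c := by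
    simp [hcdef, mul_comm]
  have h3 : ∑ j, a j * (starRingEnd ℂ) (a j) = (R : ℂ) := by
    simp [hRdef, Complex.ofReal_sum, Complex.mul_conj]
  have hc2 : (Complex.normSq c : ℂ) = c * (starRingEnd ℂ) c := (Complex.mul_conj c).symm
  rw [show (∑ j, (e - lam • a) j * (starRingEnd ℂ) ((e - lam • a) j))
      = ∑ j, (e j - lam • a j) * (starRingEnd ℂ) (e j - lam • a j) from by
        refine Finset.sum_congr rfl fun j _ => by simp]
  rw [expand, h1, h2, h3, hc2, hlam]
  have : (starRingEnd ℂ) (c / (R:ℂ)) = (starRingEnd ℂ) c / (R:ℂ) := by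
    simp [map_div₀, Complex.conj_ofReal]
  rw [this]
  field_simp
  ring

lemma rowsum_conj (A : Matrix (Fin m) (Fin n) ℂ) (i : Fin m) :
    (∑ j, Complex.normSq (star (A i) j)) = ∑ j, Complex.normSq (A i j) := by
  refine Finset.sum_congr rfl fun j _ => ?_
  simp [Complex.normSq_conj]

lemma row_dot (A : Matrix (Fin m) (Fin n) ℂ) (i : Fin m) (e : Fin n → ℂ) :
    (∑ j, (starRingEnd ℂ) (star (A i) j) * e j) = A.mulVec e i := by
  simp [Matrix.mulVec, dotProduct]

lemma kacStep_sub (A : Matrix (Fin m) (Fin n) ℂ) (b : Fin m → ℂ)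
    (xs x : Fin n → ℂ) (hxs : A.mulVec xs = b) (i : Fin m) :
    kacStep A b x i - xs
      = (x - xs) - (((A.mulVec (x - xs) i) / ((∑ j, Complex.normSq (A i j) : ℝ) : ℂ)) • star (A i)) := by
  funext j
  have hb : b i = A.mulVec xs i := by rw [hxs]
  simp only [kacStep, Pi.add_apply, Pi.sub_apply, Pi.smul_apply, smul_eq_mul,
    Matrix.mulVec_sub, hb]
  ring

lemma row_pos (A : Matrix (Fin m) (Fin n) ℂ) {i : Fin m} (hAi : A i ≠ 0) :
    0 < ∑ j, Complex.normSq (A i j) := nsqv_pos hAi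

lemma nsqv_kacStep (A : Matrix (Fin m) (Fin n) ℂ) (b : Fin m → ℂ)
    (xs x : Fin n → ℂ) (hxs : A.mulVec xs = b) (i : Fin m) (hAi : A i ≠ 0) :
    nsqv (kacStep A b x i - xs)
      = nsqv (x - xs) - Complex.normSq (A.mulVec (x - xs) i) / (∑ j, Complex.normSq (A i j)) := by
  have hR : (∑ j, Complex.normSq (star (A i) j)) ≠ 0 := by
    rw [rowsum_conj]; exact (row_pos A hAi).ne'
  have := nsqv_proj (x - xs) (star (A i)) hR
  rw [row_dot, rowsum_conj] at this
  rw [kacStep_sub A b xs x hxs i, this]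

lemma exp_step (A : Matrix (Fin m) (Fin n) ℂ) (b : Fin m → ℂ)
    (xs x : Fin n → ℂ) (hxs : A.mulVec xs = b) (hA : ∀ i, A i ≠ 0)
    (hF2 : (0:ℝ) < ∑ i, ∑ j, Complex.normSq (A i j)) :
    ∑ i, ((∑ j, Complex.normSq (A i j)) / (∑ i, ∑ j, Complex.normSq (A i j)))
        * nsqv (kacStep A b x i - xs)
      = nsqv (x - xs)
        - (∑ i, Complex.normSq (A.mulVec (x - xs) i)) / (∑ i, ∑ j, Complex.normSq (A i j)) := by
  set F2 : ℝ := ∑ i, ∑ j, Complex.normSq (A i j) with hF2def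
  have step : ∀ i : Fin m, ((∑ j, Complex.normSq (A i j)) / F2) * nsqv (kacStep A b x i - xs)
      = (∑ j, Complex.normSq (A i j)) * nsqv (x - xs) / F2
        - Complex.normSq (A.mulVec (x - xs) i) / F2 := by
    intro i
    rw [nsqv_kacStep A b xs x hxs i (hA i)]
    have hRi : (∑ j, Complex.normSq (A i j)) ≠ 0 := (row_pos A (hA i)).ne'
    field_simp
  rw [Finset.sum_congr rfl fun i _ => step i, Finset.sum_sub_distrib,
    ← Finset.sum_div, ← Finset.sum_div, ← Finset.sum_mul]
  rw [mul_div_cancel_left₀ _ hF2.ne']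

lemma kacStep_mem (A : Matrix (Fin m) (Fin n) ℂ) (b : Fin m → ℂ)
    (x : Fin n → ℂ) (i : Fin m) (hx : x ∈ Set.range Aᴴ.mulVec) :
    kacStep A b x i ∈ Set.range Aᴴ.mulVec := by
  obtain ⟨u, hu⟩ := hx
  refine ⟨u + Pi.single i ((b i - A.mulVec x i) / ((∑ j, Complex.normSq (A i j) : ℝ) : ℂ)), ?_⟩
  rw [Matrix.mulVec_add, hu]
  funext j
  simp only [kacStep, Pi.add_apply, Pi.smul_apply, smul_eq_mul, Pi.star_apply]
  congr 1
  simp [Matrix.mulVec, dotProduct, Pi.single_apply, Matrix.conjTranspose_apply, mul_comm]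

lemma sub_mem (A : Matrix (Fin m) (Fin n) ℂ) {x y : Fin n → ℂ}
    (hx : x ∈ Set.range Aᴴ.mulVec) (hy : y ∈ Set.range Aᴴ.mulVec) :
    x - y ∈ Set.range Aᴴ.mulVec := by
  obtain ⟨u, hu⟩ := hx; obtain ⟨v, hv⟩ := hy
  exact ⟨u - v, by rw [Matrix.mulVec_sub, hu, hv]⟩

lemma star_row_mem (A : Matrix (Fin m) (Fin n) ℂ) (i : Fin m) :
    star (A i) ∈ Set.range Aᴴ.mulVec := by
  refine ⟨Pi.single i 1, ?_⟩
  funext j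
  simp [Matrix.mulVec, dotProduct, Pi.single_apply, Matrix.conjTranspose_apply]

lemma row_CS (A : Matrix (Fin m) (Fin n) ℂ) (i : Fin m) (y : Fin n → ℂ) :
    Complex.normSq (A.mulVec y i)
      ≤ (∑ j, Complex.normSq (A i j)) * ∑ j, Complex.normSq (y j) := by
  have h1 : ‖A.mulVec y i‖ ≤ ∑ j, ‖A i j‖ * ‖y j‖ := by
    calc ‖A.mulVec y i‖ = ‖∑ j, A i j * y j‖ := by
          simp [Matrix.mulVec, dotProduct]
      _ ≤ ∑ j, ‖A i j * y j‖ := norm_sum_le _ _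
      _ = ∑ j, ‖A i j‖ * ‖y j‖ := by
          simp [_root_.map_mul]
  have h2 : (∑ j, ‖A i j‖ * ‖y j‖) ^ 2
      ≤ (∑ j, ‖A i j‖ ^ 2) * ∑ j, ‖y j‖ ^ 2 :=
    Finset.sum_mul_sq_le_sq_mul_sq _ _ _
  have h3 : ‖A.mulVec y i‖ ^ 2
      ≤ (∑ j, ‖A i j‖ * ‖y j‖) ^ 2 :=
    pow_le_pow_left₀ (norm_nonneg _) h1 2
  calc Complex.normSq (A.mulVec y i) = ‖A.mulVec y i‖ ^ 2 :=
        (Complex.sq_norm _).symm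
    _ ≤ (∑ j, ‖A i j‖ ^ 2) * ∑ j, ‖y j‖ ^ 2 := h3.trans h2
    _ = (∑ j, Complex.normSq (A i j)) * ∑ j, Complex.normSq (y j) := by
        simp [Complex.sq_norm]

end KacAux

open KacAux in
/-- Randomized Kaczmarz expected error bound (Theorem 1):
if `Ax = b` has a solution `x* ∈ X = range(Aᴴ)`, the initialization `x⁰ ∈ X`,
and randomized Kaczmarz uses row probabilities `pᵢ = ‖aᵢ‖²/‖A‖_F²` (i.i.d. over steps),
then `E‖xᵗ − x*‖² ≤ (1 − κ_X(A))ᵗ ‖x⁰ − x*‖²`. -/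
theorem randomized_kaczmarz_expected_error_bound {m n : ℕ}
    (A : Matrix (Fin m) (Fin n) ℂ) (hA : ∀ i, A i ≠ 0)
    (b : Fin m → ℂ) (xs x0 : Fin n → ℂ)
    (hxs : A.mulVec xs = b) (hxsX : xs ∈ Set.range Aᴴ.mulVec)
    (hx0 : x0 ∈ Set.range Aᴴ.mulVec) (t : ℕ) :
    let F2 : ℝ := ∑ i, ∑ j, Complex.normSq (A i j)
    let p : Fin m → ℝ := fun i => (∑ j, Complex.normSq (A i j)) / F2
    let κ : ℝ := sInf {r : ℝ | ∃ y ∈ Set.range Aᴴ.mulVec, y ≠ 0 ∧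
      r = (∑ i, Complex.normSq (A.mulVec y i)) / (F2 * ∑ j, Complex.normSq (y j))}
    ∑ r : Fin t → Fin m, (∏ k, p (r k)) *
        (∑ j, Complex.normSq ((kacIter A b x0 (List.ofFn r) - xs) j))
      ≤ (1 - κ) ^ t * ∑ j, Complex.normSq ((x0 - xs) j) := by
  intro F2 p κ
  -- Degenerate case `m = 0`.
  rcases Nat.eq_zero_or_pos m with hm | hm
  · subst hm
    have hzero : ∀ y ∈ Set.range Aᴴ.mulVec, y = 0 := by
      rintro y ⟨u, rfl⟩
      funext j
      simp [Matrix.mulVec, dotProduct]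
    have hx0z : x0 = 0 := hzero _ hx0
    have hxsz : xs = 0 := hzero _ hxsX
    have hdiff : (∑ j, Complex.normSq ((x0 - xs) j)) = 0 := by
      simp [hx0z, hxsz]
    rw [hdiff, mul_zero]
    cases t with
    | zero =>
        haveI : Unique (Fin 0 → Fin 0) := inferInstance
        rw [Fintype.sum_unique]
        simp only [Fin.prod_univ_zero, one_mul, List.ofFn_zero, kacIter]
        exact hdiff.le
    | succ t =>
        haveI : IsEmpty (Fin (t + 1) → Fin 0) := ⟨fun f => (f 0).elim0⟩
        rw [Finset.univ_eq_empty, Finset.sum_empty]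
  -- Main case `0 < m`.
  have hRpos : ∀ i, (0:ℝ) < ∑ j, Complex.normSq (A i j) := fun i => row_pos A (hA i)
  have hF2 : (0:ℝ) < F2 := Finset.sum_pos (fun i _ => hRpos i) ⟨⟨0, hm⟩, Finset.mem_univ _⟩
  have hp_nonneg : ∀ i, 0 ≤ p i := fun i => div_nonneg (hRpos i).le hF2.le
  set X : Set (Fin n → ℂ) := Set.range Aᴴ.mulVec with hX
  set S : Set ℝ := {r : ℝ | ∃ y ∈ X, y ≠ 0 ∧
      r = (∑ i, Complex.normSq (A.mulVec y i)) / (F2 * ∑ j, Complex.normSq (y j))} with hS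
  have hbdd : BddBelow S := by
    refine ⟨0, fun r hr => ?_⟩
    obtain ⟨y, _, _, rfl⟩ := hr
    exact div_nonneg (Finset.sum_nonneg fun _ _ => Complex.normSq_nonneg _)
      (mul_nonneg hF2.le (Finset.sum_nonneg fun _ _ => Complex.normSq_nonneg _))
  have hκ_le : ∀ y ∈ X, y ≠ 0 →
      κ ≤ (∑ i, Complex.normSq (A.mulVec y i)) / (F2 * ∑ j, Complex.normSq (y j)) :=
    fun y hy hy0 => csInf_le hbdd ⟨y, hy, hy0, rfl⟩
  have hratio_le_one : ∀ y : Fin n → ℂ, y ≠ 0 →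
      (∑ i, Complex.normSq (A.mulVec y i)) / (F2 * ∑ j, Complex.normSq (y j)) ≤ 1 := by
    intro y hy0
    have hden : (0:ℝ) < F2 * ∑ j, Complex.normSq (y j) :=
      mul_pos hF2 (nsqv_pos hy0)
    rw [div_le_one hden]
    calc (∑ i, Complex.normSq (A.mulVec y i))
        ≤ ∑ i, (∑ j, Complex.normSq (A i j)) * ∑ j, Complex.normSq (y j) :=
          Finset.sum_le_sum fun i _ => row_CS A i y
      _ = F2 * ∑ j, Complex.normSq (y j) := by rw [← Finset.sum_mul]
  have hκ1 : κ ≤ 1 := by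
    set y0 : Fin n → ℂ := star (A ⟨0, hm⟩) with hy0def
    have hy0X : y0 ∈ X := star_row_mem A _
    have hy0ne : y0 ≠ 0 := by
      intro h
      apply hA ⟨0, hm⟩
      funext j
      have := congrFun h j
      simpa [hy0def, star_eq_zero] using congrArg star this
    exact (hκ_le y0 hy0X hy0ne).trans (hratio_le_one y0 hy0ne)
  -- Key one-step expectation bound.
  have key : ∀ x : Fin n → ℂ, x ∈ X →
      ∑ i, p i * nsqv (kacStep A b x i - xs) ≤ (1 - κ) * nsqv (x - xs) := by
    intro x hx
    have heq := exp_step A b xs x hxs hA hF2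
    have heq' : ∑ i, p i * nsqv (kacStep A b x i - xs)
        = nsqv (x - xs) - (∑ i, Complex.normSq (A.mulVec (x - xs) i)) / F2 := heq
    rw [heq']
    by_cases he : x - xs = 0
    · rw [he]
      have h0 : A.mulVec (0 : Fin n → ℂ) = 0 := by
        funext i; simp [Matrix.mulVec, dotProduct]
      rw [h0]
      simp [nsqv]
    · have heX : x - xs ∈ X := sub_mem A hx hxsX
      have hN : (0:ℝ) < nsqv (x - xs) := nsqv_pos he
      have hk := hκ_le _ heX he
      set Q : ℝ := ∑ i, Complex.normSq (A.mulVec (x - xs) i) with hQ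
      set N : ℝ := nsqv (x - xs) with hNdef
      have hkk : κ ≤ Q / (F2 * N) := by
        simpa [hQ, hNdef, nsqv] using hk
      have hid : N - Q / F2 = (1 - Q / (F2 * N)) * N := by
        field_simp
      rw [hid]
      exact mul_le_mul_of_nonneg_right (by linarith) hN.le
  -- Iterates stay in the range space.
  have hmem : ∀ l : List (Fin m), kacIter A b x0 l ∈ X := by
    intro l
    induction l with
    | nil => exact hx0
    | cons i l ih => exact kacStep_mem A b _ i ih
  -- Main induction.
  have main : ∀ s : ℕ,
      ∑ r : Fin s → Fin m, (∏ k, p (r k)) * nsqv (kacIter A b x0 (List.ofFn r) - xs)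
        ≤ (1 - κ) ^ s * nsqv (x0 - xs) := by
    intro s
    induction s with
    | zero =>
        haveI : Unique (Fin 0 → Fin m) := inferInstance
        rw [Fintype.sum_unique]
        simp [List.ofFn_zero, kacIter]
    | succ s ih =>
        have hsplit : ∑ r : Fin (s+1) → Fin m,
              (∏ k, p (r k)) * nsqv (kacIter A b x0 (List.ofFn r) - xs)
            = ∑ q : Fin m × (Fin s → Fin m),
              (∏ k, p ((Fin.consEquiv fun _ => Fin m) q k))
                * nsqv (kacIter A b x0 (List.ofFn ((Fin.consEquiv fun _ => Fin m) q)) - xs) :=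
          (Fintype.sum_equiv (Fin.consEquiv fun _ => Fin m) _ _ (fun q => rfl)).symm
        rw [hsplit, Fintype.sum_prod_type]
        have hterm : ∀ (i : Fin m) (r' : Fin s → Fin m),
            (∏ k, p ((Fin.consEquiv fun _ => Fin m) (i, r') k))
              * nsqv (kacIter A b x0 (List.ofFn ((Fin.consEquiv fun _ => Fin m) (i, r'))) - xs)
            = (p i * ∏ k, p (r' k))
              * nsqv (kacStep A b (kacIter A b x0 (List.ofFn r')) i - xs) := by
          intro i r'
          have hfn : List.ofFn ((Fin.consEquiv fun _ => Fin m) (i, r')) = i :: List.ofFn r' := by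
            rw [List.ofFn_succ]
            simp [Fin.consEquiv]
          have hprod : (∏ k, p ((Fin.consEquiv fun _ => Fin m) (i, r') k))
              = p i * ∏ k, p (r' k) := by
            rw [Fin.prod_univ_succ]
            simp [Fin.consEquiv]
          rw [hfn, hprod]
          rfl
        calc ∑ i, ∑ r' : Fin s → Fin m,
              (∏ k, p ((Fin.consEquiv fun _ => Fin m) (i, r') k))
                * nsqv (kacIter A b x0 (List.ofFn ((Fin.consEquiv fun _ => Fin m) (i, r'))) - xs)
            = ∑ r' : Fin s → Fin m, (∏ k, p (r' k))
                * ∑ i, p i * nsqv (kacStep A b (kacIter A b x0 (List.ofFn r')) i - xs) := by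
              rw [Finset.sum_comm]
              refine Finset.sum_congr rfl fun r' _ => ?_
              rw [Finset.mul_sum]
              refine Finset.sum_congr rfl fun i _ => ?_
              rw [hterm i r']
              ring
          _ ≤ ∑ r' : Fin s → Fin m, (∏ k, p (r' k))
                * ((1 - κ) * nsqv (kacIter A b x0 (List.ofFn r') - xs)) := by
              refine Finset.sum_le_sum fun r' _ => ?_
              exact mul_le_mul_of_nonneg_left (key _ (hmem _))
                (Finset.prod_nonneg fun k _ => hp_nonneg _)
          _ = (1 - κ) * ∑ r' : Fin s → Fin m,
                (∏ k, p (r' k)) * nsqv (kacIter A b x0 (List.ofFn r') - xs) := by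
              rw [Finset.mul_sum]
              refine Finset.sum_congr rfl fun r' _ => by ring
          _ ≤ (1 - κ) * ((1 - κ) ^ s * nsqv (x0 - xs)) :=
              mul_le_mul_of_nonneg_left ih (by linarith)
          _ = (1 - κ) ^ (s + 1) * nsqv (x0 - xs) := by ring
  exact main t
end

section
/- Gain formula for the consistent underdetermined system: for ξ ≥ 0 and B = [Q; √ξ I_K] (with B full column rank), the minimum gain of B^H over the subspace X = range(B) equals κ_X(B^H) = (λ_min(Q^H Q) + ξ)/(||Q||_F^2 + K ξ), where λ_min denotes the smallest eigenvalue. -/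
open Matrix

private lemma gain_sum_normSq_eq {n : ℕ} (v : EuclideanSpace ℂ (Fin n)) :
    ∑ i, Complex.normSq (v i) = ‖v‖ ^ 2 := by
  rw [EuclideanSpace.norm_eq, Real.sq_sqrt (by positivity)]
  simp [Complex.sq_norm]

private lemma gain_sum_normSq_pos {n : Type*} [Fintype n] (y : n → ℂ) (hy : y ≠ 0) :
    0 < ∑ i, Complex.normSq (y i) := by
  obtain ⟨i, hi⟩ := Function.ne_iff.mp hy
  exact Finset.sum_pos' (fun j _ => Complex.normSq_nonneg _)
    ⟨i, Finset.mem_univ i, by simpa using Complex.normSq_pos.mpr hi⟩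

private lemma gain_repr_mulVec {K : ℕ} (S : Matrix (Fin K) (Fin K) ℂ) (hS : S.IsHermitian)
    (b : OrthonormalBasis (Fin K) ℂ (EuclideanSpace ℂ (Fin K)))
    (d : Fin K → ℝ) (hb : ∀ i, S *ᵥ (b i : EuclideanSpace ℂ (Fin K)) = (d i : ℂ) • (b i : EuclideanSpace ℂ (Fin K)))
    (v : EuclideanSpace ℂ (Fin K)) (i : Fin K) :
    b.repr (WithLp.toLp 2 (S *ᵥ v)) i = (d i : ℂ) * b.repr v i := by
  rw [b.repr_apply_apply, b.repr_apply_apply]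
  rw [EuclideanSpace.inner_eq_star_dotProduct, EuclideanSpace.inner_eq_star_dotProduct]
  rw [dotProduct_comm, dotProduct_comm (WithLp.ofLp v)]
  show star ((b i : EuclideanSpace ℂ (Fin K)) : Fin K → ℂ) ⬝ᵥ (S *ᵥ v)
    = (d i : ℂ) * (star ((b i : EuclideanSpace ℂ (Fin K)) : Fin K → ℂ) ⬝ᵥ v)
  rw [dotProduct_mulVec]
  have h1 : star ((b i : EuclideanSpace ℂ (Fin K)) : Fin K → ℂ) ᵥ* S
      = star (S *ᵥ (b i : EuclideanSpace ℂ (Fin K))) := by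
    rw [star_mulVec, hS.eq]
  rw [h1, hb i]
  show star ((d i : ℂ) • ((b i : EuclideanSpace ℂ (Fin K)) : Fin K → ℂ)) ⬝ᵥ v = _
  rw [star_smul, smul_dotProduct]
  simp [Complex.star_def, Complex.conj_ofReal]

private lemma gain_num_eq {K : ℕ} (S : Matrix (Fin K) (Fin K) ℂ)
    (b : OrthonormalBasis (Fin K) ℂ (EuclideanSpace ℂ (Fin K))) (d : Fin K → ℝ)
    (hrepr : ∀ (v : EuclideanSpace ℂ (Fin K)) i, b.repr (WithLp.toLp 2 (S *ᵥ v)) i = (d i : ℂ) * b.repr v i)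
    (v : EuclideanSpace ℂ (Fin K)) :
    ∑ k, Complex.normSq ((S *ᵥ v) k) = ∑ i, (d i)^2 * Complex.normSq (b.repr v i) := by
  set y : EuclideanSpace ℂ (Fin K) := WithLp.toLp 2 (S *ᵥ v : Fin K → ℂ) with hy
  have h1 : ∑ k, Complex.normSq ((S *ᵥ v) k) = ‖y‖ ^ 2 := gain_sum_normSq_eq y
  rw [h1, ← b.repr.norm_map y, ← gain_sum_normSq_eq]
  refine Finset.sum_congr rfl fun i _ => ?_
  rw [show b.repr y i = (d i : ℂ) * b.repr v i from hrepr v i, Complex.normSq_mul,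
    Complex.normSq_ofReal]
  ring

private lemma gain_den_eq {M K : ℕ} (B : Matrix (Fin M ⊕ Fin K) (Fin K) ℂ)
    (S : Matrix (Fin K) (Fin K) ℂ) (hBS : Bᴴ * B = S)
    (b : OrthonormalBasis (Fin K) ℂ (EuclideanSpace ℂ (Fin K))) (d : Fin K → ℝ)
    (hrepr : ∀ (v : EuclideanSpace ℂ (Fin K)) i, b.repr (WithLp.toLp 2 (S *ᵥ v)) i = (d i : ℂ) * b.repr v i)
    (v : EuclideanSpace ℂ (Fin K)) :
    ∑ j, Complex.normSq ((B *ᵥ v) j) = ∑ i, d i * Complex.normSq (b.repr v i) := by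
  have key : ((∑ j, Complex.normSq ((B *ᵥ v) j) : ℝ) : ℂ)
      = ((∑ i, d i * Complex.normSq (b.repr v i) : ℝ) : ℂ) := by
    push_cast
    have h1 : ((∑ j, (Complex.normSq ((B *ᵥ v) j) : ℂ))) = star (B *ᵥ v) ⬝ᵥ (B *ᵥ v) := by
      simp [dotProduct, Complex.normSq_eq_conj_mul_self]
    rw [h1]
    have h2 : star (B *ᵥ v) ⬝ᵥ (B *ᵥ v) = star v ⬝ᵥ (S *ᵥ v) := by
      rw [star_mulVec, ← dotProduct_mulVec, mulVec_mulVec, hBS]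
    rw [h2]
    have h3 : star v ⬝ᵥ (S *ᵥ v)
        = @inner ℂ _ _ v (WithLp.toLp 2 (S *ᵥ v)) := by
      rw [EuclideanSpace.inner_eq_star_dotProduct, dotProduct_comm]
    rw [h3, ← b.repr.inner_map_map v (WithLp.toLp 2 (S *ᵥ v))]
    rw [EuclideanSpace.inner_eq_star_dotProduct, dotProduct_comm]
    show ∑ i, (starRingEnd ℂ) (b.repr v i) * (b.repr (WithLp.toLp 2 (S *ᵥ v)) i) = _
    refine Finset.sum_congr rfl fun i _ => ?_
    rw [hrepr v i, Complex.normSq_eq_conj_mul_self]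
    ring
  exact_mod_cast key

/-- Gain formula for the consistent underdetermined system: for `ξ ≥ 0`
and `B = [Q; √ξ I_K]` with full column rank, the minimum gain of `Bᴴ` over the
subspace `X = range(B)` equals `(λ_min(Qᴴ Q) + ξ)/(‖Q‖_F² + K ξ)`. -/
theorem gain_formula_underdetermined {M K : ℕ}
    (Q : Matrix (Fin M) (Fin K) ℂ) (ξ : ℝ) (hξ : 0 ≤ ξ) :
    let B : Matrix (Fin M ⊕ Fin K) (Fin K) ℂ :=
      Matrix.fromRows Q (((Real.sqrt ξ : ℝ) : ℂ) • (1 : Matrix (Fin K) (Fin K) ℂ))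
    let F2 : ℝ := ∑ i, ∑ j, Complex.normSq (Q i j)
    let lmin : ℝ := ⨅ i, (Matrix.isHermitian_conjTranspose_mul_self Q).eigenvalues i
    Function.Injective B.mulVec →
      sInf {r : ℝ | ∃ x ∈ Set.range B.mulVec, x ≠ 0 ∧
          r = (∑ k, Complex.normSq (Bᴴ.mulVec x k)) /
            ((F2 + K * ξ) * ∑ i, Complex.normSq (x i))}
        = (lmin + ξ) / (F2 + K * ξ) := by
  intro B F2 lmin hinj
  have hB : B = Matrix.fromRows Q (((Real.sqrt ξ : ℝ) : ℂ) • 1) := rfl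
  have hF2 : F2 = ∑ i, ∑ j, Complex.normSq (Q i j) := rfl
  have hlmin : lmin = ⨅ i, (Matrix.isHermitian_conjTranspose_mul_self Q).eigenvalues i := rfl
  rcases Nat.eq_zero_or_pos K with hK0 | hKpos
  · -- degenerate case K = 0
    subst hK0
    have hempty : {r : ℝ | ∃ x ∈ Set.range B.mulVec, x ≠ 0 ∧
        r = (∑ k, Complex.normSq (Bᴴ.mulVec x k)) /
          ((F2 + (0:ℕ) * ξ) * ∑ i, Complex.normSq (x i))} = ∅ := by
      ext r
      simp only [Set.mem_setOf_eq, Set.mem_empty_iff_false, iff_false, not_exists]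
      rintro x ⟨⟨v, rfl⟩, hx0, -⟩
      exact hx0 (by rw [show v = 0 from Subsingleton.elim v 0, Matrix.mulVec_zero])
    rw [hempty, Real.sInf_empty]
    have hF0 : F2 + (0:ℕ) * ξ = 0 := by simp [hF2]
    rw [hF0, div_zero]
  · -- main case K > 0
    have hne : Nonempty (Fin K) := ⟨⟨0, hKpos⟩⟩
    set hA := Matrix.isHermitian_conjTranspose_mul_self Q with hAdef
    set μ : Fin K → ℝ := hA.eigenvalues with hμ
    set b := hA.eigenvectorBasis with hbdef
    set d : Fin K → ℝ := fun i => μ i + ξ with hd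
    set S : Matrix (Fin K) (Fin K) ℂ := Qᴴ * Q + (ξ : ℂ) • 1 with hSdef
    have hBS : Bᴴ * B = S := by
      rw [hB, conjTranspose_fromRows_eq_fromCols_conjTranspose, fromCols_mul_fromRows,
        hSdef]
      congr 1
      rw [conjTranspose_smul, conjTranspose_one, smul_mul_smul_comm, one_mul]
      congr 1
      rw [Complex.star_def, Complex.conj_ofReal, ← Complex.ofReal_mul, Real.mul_self_sqrt hξ]
    have hS : S.IsHermitian := by
      refine hA.add ?_
      unfold Matrix.IsHermitian
      rw [conjTranspose_smul, conjTranspose_one, Complex.star_def, Complex.conj_ofReal]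
    have hb : ∀ i, S *ᵥ (b i : EuclideanSpace ℂ (Fin K))
        = (d i : ℂ) • (b i : EuclideanSpace ℂ (Fin K)) := by
      intro i
      have h := hA.mulVec_eigenvectorBasis i
      rw [hSdef, Matrix.add_mulVec, smul_mulVec, one_mulVec]
      rw [show (Qᴴ * Q) *ᵥ (b i : EuclideanSpace ℂ (Fin K))
        = μ i • ((b i : EuclideanSpace ℂ (Fin K)) : Fin K → ℂ) from h]
      funext k
      show μ i • ((b i : EuclideanSpace ℂ (Fin K)) k) + (ξ : ℂ) * ((b i) k)
        = ((μ i + ξ : ℝ) : ℂ) * ((b i) k)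
      rw [Complex.real_smul]
      push_cast
      ring
    have hrepr : ∀ (v : EuclideanSpace ℂ (Fin K)) i,
        b.repr (WithLp.toLp 2 (S *ᵥ v)) i = (d i : ℂ) * b.repr v i :=
      gain_repr_mulVec S hS b d hb
    have hden_basis : ∀ i : Fin K,
        ∑ j, Complex.normSq ((B *ᵥ (b i : EuclideanSpace ℂ (Fin K))) j) = d i := by
      intro i
      rw [gain_den_eq B S hBS b d hrepr (b i)]
      rw [show b.repr (b i) = EuclideanSpace.single i 1 from b.repr_self i]
      rw [Finset.sum_eq_single i]
      · simp
      · intro j _ hj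
        simp [EuclideanSpace.single_apply, hj]
      · intro h
        exact absurd (Finset.mem_univ i) h
    have hbne : ∀ i, ((b i : EuclideanSpace ℂ (Fin K)) : Fin K → ℂ) ≠ 0 := by
      intro i h
      have h1 : ‖b i‖ = 1 := b.orthonormal.1 i
      have h2 : b i = 0 := by simpa using h
      rw [h2, norm_zero] at h1
      norm_num at h1
    have hBbne : ∀ i, B *ᵥ (b i : EuclideanSpace ℂ (Fin K)) ≠ 0 := by
      intro i h
      exact hbne i (hinj (by rw [show B.mulVec (b i) = 0 from h, Matrix.mulVec_zero]))
    have hd_pos : ∀ i, 0 < d i := by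
      intro i
      rw [← hden_basis i]
      exact gain_sum_normSq_pos _ (hBbne i)
    have hbdd : BddBelow (Set.range μ) := (Set.finite_range μ).bddBelow
    have hlmin_le : ∀ i, lmin ≤ μ i := fun i => hlmin ▸ ciInf_le hbdd i
    obtain ⟨i₀, hi₀⟩ := Finite.exists_min μ
    have hlmin_eq : lmin = μ i₀ := by
      rw [hlmin]
      exact le_antisymm (ciInf_le hbdd i₀) (le_ciInf hi₀)
    have hF2nn : (0:ℝ) ≤ F2 := by
      rw [hF2]
      exact Finset.sum_nonneg fun _ _ => Finset.sum_nonneg fun _ _ => Complex.normSq_nonneg _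
    have hc : 0 < F2 + (K : ℝ) * ξ := by
      rcases lt_or_eq_of_le (add_nonneg hF2nn (mul_nonneg (Nat.cast_nonneg K) hξ)) with h | h
      · exact h
      · exfalso
        have hKξ : (K:ℝ) * ξ = 0 := by
          nlinarith [mul_nonneg (Nat.cast_nonneg K (α := ℝ)) hξ]
        have hξ0 : ξ = 0 := by
          rcases mul_eq_zero.mp hKξ with h' | h'
          · exact absurd h' (Nat.cast_ne_zero.mpr (Nat.pos_iff_ne_zero.mp hKpos))
          · exact h'
        have hF20 : F2 = 0 := by linarith
        have hQ0 : Q = 0 := by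
          ext i j
          have h1 : Complex.normSq (Q i j) = 0 := by
            by_contra hne'
            have hpos : 0 < Complex.normSq (Q i j) :=
              lt_of_le_of_ne (Complex.normSq_nonneg _) (Ne.symm hne')
            have hge : Complex.normSq (Q i j) ≤ F2 := by
              rw [hF2]
              calc Complex.normSq (Q i j) ≤ ∑ j', Complex.normSq (Q i j') :=
                    Finset.single_le_sum (fun _ _ => Complex.normSq_nonneg _) (Finset.mem_univ j)
                _ ≤ ∑ i', ∑ j', Complex.normSq (Q i' j') :=
                    Finset.single_le_sum
                      (fun _ _ => Finset.sum_nonneg fun _ _ => Complex.normSq_nonneg _)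
                      (Finset.mem_univ i)
            linarith
          simpa using Complex.normSq_eq_zero.mp h1
        have hBv : ∀ v : Fin K → ℂ, B *ᵥ v = 0 := by
          intro v
          rw [hB, fromRows_mulVec, hQ0, hξ0]
          funext j
          cases j with
          | inl m => simp
          | inr k => simp
        have h10 : (fun _ : Fin K => (1:ℂ)) = (0 : Fin K → ℂ) :=
          hinj (by rw [show B.mulVec (fun _ => 1) = 0 from hBv _,
            show B.mulVec 0 = 0 from hBv _])
        exact one_ne_zero (congrFun h10 ⟨0, hKpos⟩)
    -- the infimum via IsLeast
    apply IsLeast.csInf_eq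
    constructor
    · -- membership: achieved at the eigenvector for the minimal eigenvalue
      refine ⟨B *ᵥ (b i₀ : EuclideanSpace ℂ (Fin K)), ⟨(b i₀ : EuclideanSpace ℂ (Fin K)), rfl⟩,
        hBbne i₀, ?_⟩
      have hnum : ∑ k, Complex.normSq ((Bᴴ.mulVec (B *ᵥ (b i₀ : EuclideanSpace ℂ (Fin K)))) k)
          = (d i₀)^2 := by
        rw [show Bᴴ.mulVec (B *ᵥ (b i₀ : EuclideanSpace ℂ (Fin K)))
          = S *ᵥ (b i₀ : EuclideanSpace ℂ (Fin K)) by rw [mulVec_mulVec, hBS]]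
        rw [gain_num_eq S b d hrepr (b i₀)]
        rw [show b.repr (b i₀) = EuclideanSpace.single i₀ 1 from b.repr_self i₀]
        rw [Finset.sum_eq_single i₀]
        · simp
        · intro j _ hj
          simp [EuclideanSpace.single_apply, hj]
        · intro h
          exact absurd (Finset.mem_univ i₀) h
      rw [hnum, hden_basis i₀]
      have h6 : d i₀ ≠ 0 := ne_of_gt (hd_pos i₀)
      have h7 : lmin + ξ = d i₀ := by rw [hlmin_eq]
      rw [h7]
      rw [pow_two, mul_comm (F2 + (K:ℝ) * ξ) (d i₀), mul_div_mul_left _ _ h6]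
    · -- lower bound
      rintro r ⟨x, ⟨v, rfl⟩, hx0, rfl⟩
      have hnum : ∑ k, Complex.normSq ((Bᴴ.mulVec (B.mulVec v)) k)
          = ∑ i, (d i)^2 * Complex.normSq (b.repr (WithLp.toLp 2 v) i) := by
        rw [show Bᴴ.mulVec (B.mulVec v) = S *ᵥ v by
          rw [Matrix.mulVec_mulVec, hBS]]
        exact gain_num_eq S b d hrepr (WithLp.toLp 2 v)
      have hden : ∑ i, Complex.normSq ((B.mulVec v) i)
          = ∑ i, d i * Complex.normSq (b.repr (WithLp.toLp 2 v) i) :=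
        gain_den_eq B S hBS b d hrepr (WithLp.toLp 2 v)
      have hdenpos : 0 < ∑ i, d i * Complex.normSq (b.repr (WithLp.toLp 2 v) i) := by
        rw [← hden]
        exact gain_sum_normSq_pos _ hx0
      rw [hnum, hden]
      set den := ∑ i, d i * Complex.normSq (b.repr (WithLp.toLp 2 v) i) with hden_def
      set num := ∑ i, (d i)^2 * Complex.normSq (b.repr (WithLp.toLp 2 v) i) with hnum_def
      have key : (lmin + ξ) * den ≤ num := by
        rw [hden_def, hnum_def, Finset.mul_sum]
        refine Finset.sum_le_sum fun i _ => ?_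
        have h1 := hlmin_le i
        have h2 := hd_pos i
        have h3 : Complex.normSq (b.repr (WithLp.toLp 2 v) i) ≥ 0 := Complex.normSq_nonneg _
        have h4 : lmin + ξ ≤ d i := by rw [hd]; simpa using add_le_add_right h1 ξ
        nlinarith [mul_le_mul_of_nonneg_right h4 (mul_nonneg h2.le h3)]
      rw [div_le_div_iff₀ hc (mul_pos hc hdenpos)]
      calc (lmin + ξ) * ((F2 + (K:ℝ) * ξ) * den)
          = (F2 + (K:ℝ) * ξ) * ((lmin + ξ) * den) := by ring
        _ ≤ (F2 + (K:ℝ) * ξ) * num := mul_le_mul_of_nonneg_left key hc.le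
        _ = num * (F2 + (K:ℝ) * ξ) := by ring
end
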